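/- arXiv:1503.02839 — 3 statements merged into one kernel-verified Lean document; each statement's English description precedes it below -/
import Mathlib

section
/- Let A be a finite set of actions. For each time t ≥ 1 let k_t ∈ A be the played action, γ_t : A → ℝ a threshold function, and Γ_t ∈ ℝ the realized interference. Define actual rewards w_t(a) = 1 if Γ_t ≤ γ_t(a) and 0 otherwise, and estimated rewards w̃_t(a) = 1 if γ_t(a) > γ_t(k_t) or w_t(k_t) = 1, and 0 otherwise. Fix distinct actions k, k̂ ∈ A and define the actual regret R_T = max{0, (1/T) Σ_{t ≤ T, k_t = k} (w_t(k̂) − w_t(k))} and the estimated regret R̃_T = max{0, (1/T) Σ_{t ≤ T, k_t = k} (w̃_t(k̂) − w_t(k))}. Then 0 ≤ R_T ≤ R̃_T for every T ≥ 1, and if R̃_T → 0 as T → ∞ then R_T → 0 as T → ∞. -/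
open Filter

theorem estimated_regret_dominates_and_convergence
    {A : Type*} [Fintype A] [DecidableEq A]
    (k : ℕ → A) (γ : ℕ → A → ℝ) (Γ : ℕ → ℝ)
    (w wEst : ℕ → A → ℝ)
    (hw : ∀ t a, w t a = if Γ t ≤ γ t a then 1 else 0)
    (hwEst : ∀ t a, wEst t a = if γ t (k t) < γ t a ∨ w t (k t) = 1 then 1 else 0)
    (a a' : A) (hne : a ≠ a')
    (R REst : ℕ → ℝ)
    (hR : ∀ T, R T = max 0 ((1 / (T : ℝ)) *
      ∑ t ∈ Finset.Icc 1 T, if k t = a then w t a' - w t a else 0))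
    (hREst : ∀ T, REst T = max 0 ((1 / (T : ℝ)) *
      ∑ t ∈ Finset.Icc 1 T, if k t = a then wEst t a' - w t a else 0)) :
    (∀ T, 1 ≤ T → 0 ≤ R T ∧ R T ≤ REst T) ∧
      (Tendsto REst atTop (nhds 0) → Tendsto R atTop (nhds 0)) := by
  have hle : ∀ t, w t a' ≤ wEst t a' := by
    intro t
    rw [hw, hwEst]
    by_cases h : Γ t ≤ γ t a'
    · simp only [if_pos h]
      by_cases h2 : w t (k t) = 1
      · rw [if_pos (Or.inr h2)]
      · have : ¬ Γ t ≤ γ t (k t) := by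
          intro hc; rw [hw] at h2; simp [hc] at h2
        have : γ t (k t) < γ t a' := lt_of_lt_of_le (not_le.mp this) h
        rw [if_pos (Or.inl this)]
    · simp only [if_neg h]
      split <;> norm_num
  have hterm : ∀ t, (if k t = a then w t a' - w t a else 0)
      ≤ (if k t = a then wEst t a' - w t a else 0) := by
    intro t; split
    · linarith [hle t]
    · exact le_rfl
  have key : ∀ T, R T ≤ REst T := by
    intro T
    rw [hR, hREst]
    apply max_le_max le_rfl
    apply mul_le_mul_of_nonneg_left _ (by positivity)
    exact Finset.sum_le_sum fun t _ => hterm t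
  have hnn : ∀ T, 0 ≤ R T := fun T => (hR T) ▸ le_max_left 0 _
  refine ⟨fun T _ => ⟨hnn T, key T⟩, fun h => ?_⟩
  exact squeeze_zero hnn key h
end

section
/- Consider a finite N-player game: for each player i ∈ {1,…,N} a finite nonempty action set A_i, the profile set A = A_1 × ⋯ × A_N, and utility functions u_i : A → ℝ. Let k_1, k_2, … ∈ A be a sequence of profiles, f_T(b) = |{t ≤ T : k_t = b}|/T the empirical frequency, and R_T(i, a, a') = max{0, (1/T) Σ_{t ≤ T, (k_t)_i = a} (u_i(a', (k_t)_{-i}) − u_i(k_t))} the regret of player i for the pair (a, a'). Fix ε ≥ 0. Then limsup_{T→∞} R_T(i, a, a') ≤ ε for every player i and all a, a' ∈ A_i with a ≠ a', if and only if the empirical frequencies converge to the set of correlated ε-equilibria, i.e., inf{ max_{b ∈ A} |f_T(b) − ψ(b)| : ψ a correlated ε-equilibrium } → 0 as T → ∞. -/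
open Filter

set_option linter.unusedSectionVars false
set_option maxHeartbeats 1000000

section Auxiliary

open Function

namespace CEE


variable {α : Type*} [Fintype α]

/-- The probability simplex on a finite type, as a subset of `α → ℝ`. -/
def simplex (α : Type*) [Fintype α] : Set (α → ℝ) :=
  {q | (∀ a, 0 ≤ q a) ∧ ∑ a, q a = 1}

lemma isCompact_simplex : IsCompact (simplex α) := by
  have hsub : simplex α ⊆ Set.univ.pi (fun _ : α => Set.Icc (0:ℝ) 1) := by
    rintro q ⟨h0, h1⟩ a _
    refine ⟨h0 a, ?_⟩
    calc q a ≤ ∑ b, q b := Finset.single_le_sum (fun b _ => h0 b) (Finset.mem_univ a)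
    _ = 1 := h1
  have hcomp : IsCompact (Set.univ.pi (fun _ : α => Set.Icc (0:ℝ) 1)) :=
    isCompact_univ_pi (fun _ => isCompact_Icc)
  refine hcomp.of_isClosed_subset ?_ hsub
  have h1 : IsClosed {q : α → ℝ | ∀ a, 0 ≤ q a} := by
    have : {q : α → ℝ | ∀ a, 0 ≤ q a} = ⋂ a, {q | 0 ≤ q a} := by
      ext q; simp
    rw [this]
    exact isClosed_iInter fun a => isClosed_le continuous_const (continuous_apply a)
  have h2 : IsClosed {q : α → ℝ | ∑ a, q a = 1} :=
    isClosed_eq (by continuity) continuous_const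
  exact (h1.inter h2)



variable {α : Type*} [Fintype α]




lemma mem_simplex_le_one {q : α → ℝ} (hq : q ∈ simplex α) (a : α) : q a ≤ 1 := by
  obtain ⟨h0, h1⟩ := hq
  calc q a ≤ ∑ b, q b := Finset.single_le_sum (fun b _ => h0 b) (Finset.mem_univ a)
  _ = 1 := h1

/-- Every nonnegative square matrix on a finite nonempty type has a "stationary
distribution" `q` with `∑ a, q a * M a c = q c * ∑ b, M c b`. -/
lemma exists_stationary [Nonempty α] (M : α → α → ℝ) (hM : ∀ a b, 0 ≤ M a b) :
    ∃ q ∈ simplex α, ∀ c, ∑ a, q a * M a c = q c * ∑ b, M c b := by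
  classical
  set s : α → ℝ := fun a => ∑ b, M a b with hs
  set μ : ℝ := 1 + ∑ a, s a with hμ
  have hs0 : ∀ a, 0 ≤ s a := fun a => Finset.sum_nonneg fun b _ => hM a b
  have hμ0 : (0:ℝ) < μ := by
    have : 0 ≤ ∑ a, s a := Finset.sum_nonneg fun a _ => hs0 a
    linarith
  have hsμ : ∀ a, s a ≤ μ := by
    intro a
    have : s a ≤ ∑ b, s b := Finset.single_le_sum (fun b _ => hs0 b) (Finset.mem_univ a)
    linarith
  -- the stochastic map
  set Φ : (α → ℝ) → (α → ℝ) := fun q c => q c * (1 - s c / μ) + (∑ a, q a * M a c) / μ with hΦ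
  have hΦmem : ∀ q ∈ simplex α, Φ q ∈ simplex α := by
    rintro q ⟨h0, h1⟩
    constructor
    · intro c
      have t1 : 0 ≤ 1 - s c / μ := by
        rw [sub_nonneg, div_le_one hμ0]; exact hsμ c
      have t2 : 0 ≤ ∑ a, q a * M a c :=
        Finset.sum_nonneg fun a _ => mul_nonneg (h0 a) (hM a c)
      exact add_nonneg (mul_nonneg (h0 c) t1) (div_nonneg t2 hμ0.le)
    · have key : ∑ c, (∑ a, q a * M a c) = ∑ a, q a * s a := by
        rw [Finset.sum_comm]
        exact Finset.sum_congr rfl fun a _ => by rw [hs, ← Finset.mul_sum]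
      show ∑ c, (q c * (1 - s c / μ) + (∑ a, q a * M a c) / μ) = 1
      rw [Finset.sum_add_distrib, ← Finset.sum_div, key]
      have step : ∀ c : α, q c * (1 - s c / μ) = q c - (q c * s c) / μ := fun c => by ring
      rw [Finset.sum_congr rfl (fun c _ => step c), Finset.sum_sub_distrib,
        ← Finset.sum_div, h1]
      ring
  -- the iteration
  set q0 : α → ℝ := fun _ => (Fintype.card α : ℝ)⁻¹ with hq0
  have hq0mem : q0 ∈ simplex α := by
    constructor
    · intro a; positivity
    · simp only [hq0, Finset.sum_const, Finset.card_univ, nsmul_eq_mul]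
      rw [mul_inv_cancel₀]
      exact_mod_cast Fintype.card_ne_zero
  set p : ℕ → (α → ℝ) := fun n => Φ^[n] q0 with hp
  have hpmem : ∀ n, p n ∈ simplex α := by
    intro n; induction n with
    | zero => simpa [hp] using hq0mem
    | succ n ih =>
      have : p (n+1) = Φ (p n) := by
        simp only [hp, Function.iterate_succ_apply']
      rw [this]; exact hΦmem _ ih
  set v : ℕ → (α → ℝ) := fun n c => (1/(n:ℝ)) * ∑ t ∈ Finset.range n, p t c with hv
  have hvmem : ∀ n, v (n+1) ∈ simplex α := by
    intro n
    constructor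
    · intro c
      have : 0 ≤ ∑ t ∈ Finset.range (n+1), p t c :=
        Finset.sum_nonneg fun t _ => (hpmem t).1 c
      positivity
    · show ∑ c, (1/((n+1:ℕ):ℝ)) * ∑ t ∈ Finset.range (n+1), p t c = 1
      rw [← Finset.mul_sum, Finset.sum_comm]
      have : ∀ t ∈ Finset.range (n+1), ∑ c, p t c = 1 := fun t _ => (hpmem t).2
      rw [Finset.sum_congr rfl this, Finset.sum_const, Finset.card_range,
        nsmul_eq_mul, mul_one, one_div, inv_mul_cancel₀]
      exact_mod_cast Nat.succ_ne_zero n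
  -- the key algebraic identity
  have hiter : ∀ n : ℕ, ∀ c, Φ (v n) c = v n c + (1/(n:ℝ)) * (p n c - q0 c) := by
    intro n c
    have swap : ∑ a, v n a * M a c = (1/(n:ℝ)) * ∑ t ∈ Finset.range n, ∑ a, p t a * M a c := by
      simp only [hv]
      rw [Finset.mul_sum]
      have step : ∀ t ∈ Finset.range n, (1/(n:ℝ)) * ∑ a, p t a * M a c
          = ∑ a, (1/(n:ℝ)) * (p t a * M a c) := fun t _ => Finset.mul_sum _ _ _
      rw [Finset.sum_congr rfl step, Finset.sum_comm]
      refine Finset.sum_congr rfl fun a _ => ?_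
      rw [Finset.mul_sum, Finset.sum_mul]
      exact Finset.sum_congr rfl fun t _ => by ring
    have h1 : Φ (v n) c = (1/(n:ℝ)) * ∑ t ∈ Finset.range n, Φ (p t) c := by
      have expand : ∑ t ∈ Finset.range n, Φ (p t) c
          = (∑ t ∈ Finset.range n, p t c) * (1 - s c/μ)
            + (∑ t ∈ Finset.range n, ∑ a, p t a * M a c)/μ := by
        simp only [hΦ]
        rw [Finset.sum_add_distrib, Finset.sum_mul, Finset.sum_div, Finset.sum_div]
      show v n c * (1 - s c / μ) + (∑ a, v n a * M a c) / μ = _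
      rw [expand, swap]
      simp only [hv]
      ring
    have h2 : ∀ t, Φ (p t) c = p (t+1) c := by
      intro t; simp only [hp, Function.iterate_succ_apply']
    rw [h1, Finset.sum_congr rfl (fun t _ => h2 t)]
    have h3 : ∑ t ∈ Finset.range n, p (t+1) c
        = (∑ t ∈ Finset.range n, p t c) + p n c - p 0 c := by
      rw [← Finset.sum_range_succ]
      rw [Finset.sum_range_succ' (fun t => p t c) n]
      ring
    rw [h3]
    have h4 : p 0 c = q0 c := by simp [hp]
    rw [h4]
    simp only [hv]
    ring
  -- extract a limit point
  obtain ⟨q, hqmem, σ, hσ, hlim⟩ :=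
    isCompact_simplex.tendsto_subseq (x := fun n => v (n+1)) hvmem
  have hlim' : ∀ c, Tendsto (fun n => v (σ n + 1) c) atTop (nhds (q c)) := by
    intro c
    exact (tendsto_pi_nhds.mp hlim c)
  -- Φ q = q
  have hfix : ∀ c, Φ q c = q c := by
    intro c
    have hB : Tendsto (fun n => Φ (v (σ n + 1)) c) atTop (nhds (Φ q c)) := by
      show Tendsto (fun n => v (σ n + 1) c * (1 - s c / μ)
        + (∑ a, v (σ n + 1) a * M a c) / μ) atTop (nhds (q c * (1 - s c / μ)
        + (∑ a, q a * M a c) / μ))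
      exact (((hlim' c).mul tendsto_const_nhds).add
        ((tendsto_finset_sum _ fun a _ => (hlim' a).mul tendsto_const_nhds).div_const μ))
    have hdiff : Tendsto (fun n => Φ (v (σ n + 1)) c - v (σ n + 1) c) atTop (nhds 0) := by
      refine squeeze_zero_norm (a := fun n => 1/((σ n + 1 : ℕ):ℝ)) ?_ ?_
      · intro n
        rw [hiter]
        have hb1 : |p (σ n + 1) c - q0 c| ≤ 1 := by
          have e1 := (hpmem (σ n + 1)).1 c
          have e2 := mem_simplex_le_one (hpmem (σ n + 1)) c
          have e3 := hq0mem.1 c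
          have e4 := mem_simplex_le_one hq0mem c
          rw [abs_le]; constructor <;> linarith
        have : |(1/((σ n + 1:ℕ):ℝ)) * (p (σ n + 1) c - q0 c)|
            = (1/((σ n + 1:ℕ):ℝ)) * |p (σ n + 1) c - q0 c| := by
          rw [abs_mul, abs_of_nonneg]; positivity
        rw [Real.norm_eq_abs, add_sub_cancel_left, this]
        have hpos : (0:ℝ) ≤ 1/((σ n + 1:ℕ):ℝ) := by positivity
        calc (1/((σ n + 1:ℕ):ℝ)) * |p (σ n + 1) c - q0 c|
            ≤ (1/((σ n + 1:ℕ):ℝ)) * 1 := by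
              exact mul_le_mul_of_nonneg_left hb1 hpos
        _ = 1/((σ n + 1:ℕ):ℝ) := by ring
      · have h1 : Tendsto (fun n : ℕ => ((σ n + 1:ℕ):ℝ)) atTop atTop := by
          apply tendsto_natCast_atTop_atTop.comp
          exact (tendsto_add_atTop_nat 1).comp hσ.tendsto_atTop
        refine h1.inv_tendsto_atTop.congr (fun n => ?_)
        simp
    have : Tendsto (fun n => Φ (v (σ n + 1)) c) atTop (nhds (q c)) := by
      have := (hlim' c).add hdiff
      simp only [add_zero] at this
      convert this using 2 with n
      ring
    exact tendsto_nhds_unique hB this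
  refine ⟨q, hqmem, fun c => ?_⟩
  have h := hfix c
  simp only [hΦ] at h
  have h2 : (∑ a, q a * M a c) / μ = (q c * s c) / μ := by
    have : q c * (1 - s c / μ) = q c - (q c * s c)/μ := by ring
    rw [this] at h
    linarith
  have hne : μ ≠ 0 := hμ0.ne'
  field_simp at h2
  simpa [hs] using h2


end CEE

end Auxiliary

/-- A probability distribution `ψ` on the profile set is a correlated
`ε`-equilibrium. -/
def IsCorrelatedEpsEquilibrium {N : ℕ} {A : Fin N → Type*}
    [∀ i, Fintype (A i)] [∀ i, DecidableEq (A i)]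
    (u : (i : Fin N) → ((∀ j, A j) → ℝ)) (ε : ℝ)
    (ψ : (∀ j, A j) → ℝ) : Prop :=
  (∀ b, 0 ≤ ψ b) ∧ (∑ b : (∀ j, A j), ψ b = 1) ∧
    ∀ (i : Fin N) (a a' : A i),
      ∑ b ∈ Finset.univ.filter (fun b : (∀ j, A j) => b i = a),
        ψ b * (u i (Function.update b i a') - u i b) ≤ ε

section Game

open Function

namespace CEE


variable {N : ℕ} {A : Fin N → Type*} [∀ i, Fintype (A i)] [∀ i, DecidableEq (A i)]
  [∀ i, Nonempty (A i)] (u : (i : Fin N) → ((∀ j, A j) → ℝ))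

/-- The one-step regret of player `i` for the pair `(a, a')` at profile `b`. -/
def D (i : Fin N) (a a' : A i) (b : ∀ j, A j) : ℝ :=
  if b i = a then u i (Function.update b i a') - u i b else 0

lemma D_self (i : Fin N) (a : A i) (b : ∀ j, A j) : D u i a a b = 0 := by
  unfold D
  split
  · next h => rw [← h, Function.update_eq_self, sub_self]
  · rfl

lemma sum_filter_eq (ψ : (∀ j, A j) → ℝ) (i : Fin N) (a a' : A i) :
    ∑ b ∈ Finset.univ.filter (fun b : (∀ j, A j) => b i = a),
        ψ b * (u i (Function.update b i a') - u i b)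
      = ∑ b : (∀ j, A j), ψ b * D u i a a' b := by
  rw [Finset.sum_filter]
  exact Finset.sum_congr rfl fun b _ => by by_cases h : b i = a <;> simp [D, h]

lemma fiber_expand (k : ℕ → ∀ j, A j) (T : ℕ) (g : (∀ j, A j) → ℝ) :
    ∑ t ∈ Finset.Icc 1 T, g (k t)
      = ∑ b : (∀ j, A j), (((Finset.Icc 1 T).filter (fun t => k t = b)).card : ℝ) * g b := by
  rw [← Finset.sum_fiberwise_of_maps_to (fun t _ => Finset.mem_univ (k t)) (fun t => g (k t))]
  refine Finset.sum_congr rfl fun b _ => ?_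
  have hcong : ∀ t ∈ (Finset.Icc 1 T).filter (fun t => k t = b), g (k t) = g b := by
    intro t ht; rw [(Finset.mem_filter.mp ht).2]
  rw [Finset.sum_congr rfl hcong, Finset.sum_const, nsmul_eq_mul]

lemma sum_card (k : ℕ → ∀ j, A j) (T : ℕ) :
    ∑ b : (∀ j, A j), (((Finset.Icc 1 T).filter (fun t => k t = b)).card : ℝ) = T := by
  have h := fiber_expand (A := A) k T (fun _ => (1:ℝ))
  simp only [mul_one] at h
  rw [← h, Finset.sum_const, Nat.card_Icc]
  simp

lemma sum_f_one (k : ℕ → ∀ j, A j) (f : ℕ → (∀ j, A j) → ℝ)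
    (hf : ∀ T b, f T b = ((Finset.Icc 1 T).filter (fun t => k t = b)).card / (T : ℝ))
    {T : ℕ} (hT : 1 ≤ T) : ∑ b, f T b = 1 := by
  simp only [hf]
  rw [← Finset.sum_div, sum_card, div_self]
  exact_mod_cast Nat.one_le_iff_ne_zero.mp hT

lemma sum_f_D (k : ℕ → ∀ j, A j) (f : ℕ → (∀ j, A j) → ℝ)
    (hf : ∀ T b, f T b = ((Finset.Icc 1 T).filter (fun t => k t = b)).card / (T : ℝ))
    (T : ℕ) (i : Fin N) (a a' : A i) :
    ∑ b, f T b * D u i a a' b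
      = (1/(T:ℝ)) * ∑ t ∈ Finset.Icc 1 T, D u i a a' (k t) := by
  rw [fiber_expand k T (D u i a a'), Finset.mul_sum]
  simp only [hf]
  exact Finset.sum_congr rfl fun b _ => by ring

/-- A pointwise limit of the empirical distributions along a subsequence is a
correlated ε-equilibrium, provided the average regrets are asymptotically at most ε. -/
lemma limit_is_equilibrium (ε : ℝ) (hε : 0 ≤ ε) (k : ℕ → ∀ j, A j)
    (f : ℕ → (∀ j, A j) → ℝ)
    (hf : ∀ T b, f T b = ((Finset.Icc 1 T).filter (fun t => k t = b)).card / (T : ℝ))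
    (Hlim : ∀ (i : Fin N) (a a' : A i), a ≠ a' → ∀ δ > (0:ℝ), ∀ᶠ T : ℕ in atTop,
        (1/(T:ℝ)) * ∑ t ∈ Finset.Icc 1 T, D u i a a' (k t) < ε + δ)
    (φ : ℕ → ℕ) (hφ : Tendsto φ atTop atTop) (ψ : (∀ j, A j) → ℝ)
    (hψ : ∀ b, Tendsto (fun n => f (φ n) b) atTop (nhds (ψ b))) :
    IsCorrelatedEpsEquilibrium u ε ψ := by
  have hf0 : ∀ T b, 0 ≤ f T b := by
    intro T b; rw [hf]; positivity
  refine ⟨fun b => ge_of_tendsto' (hψ b) fun n => hf0 _ b, ?_, ?_⟩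
  · -- sum is 1
    have h1 : Tendsto (fun n => ∑ b, f (φ n) b) atTop (nhds (∑ b, ψ b)) :=
      tendsto_finset_sum _ fun b _ => hψ b
    have h2 : (fun n => ∑ b, f (φ n) b) =ᶠ[atTop] (fun _ => (1:ℝ)) := by
      filter_upwards [hφ.eventually_ge_atTop 1] with n hn
      exact sum_f_one k f hf hn
    exact tendsto_nhds_unique h1 (tendsto_const_nhds.congr' h2.symm)
  · intro i a a'
    rw [sum_filter_eq]
    by_cases haa : a = a'
    · subst haa
      have : ∀ b : (∀ j, A j), ψ b * D u i a a b = 0 := fun b => by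
        rw [D_self, mul_zero]
      rw [Finset.sum_congr rfl fun b _ => this b, Finset.sum_const, smul_zero]
      exact hε
    · have hlim1 : Tendsto (fun n => ∑ b, f (φ n) b * D u i a a' b) atTop
          (nhds (∑ b, ψ b * D u i a a' b)) :=
        tendsto_finset_sum _ fun b _ => (hψ b).mul tendsto_const_nhds
      have key : ∀ δ > (0:ℝ), ∑ b, ψ b * D u i a a' b ≤ ε + δ := by
        intro δ hδ
        refine le_of_tendsto hlim1 ?_
        filter_upwards [hφ.eventually (Hlim i a a' haa δ hδ)] with n hn
        rw [sum_f_D u k f hf]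
        exact hn.le
      -- conclude ≤ ε
      by_contra hcon
      push_neg at hcon
      have := key ((∑ b, ψ b * D u i a a' b - ε)/2) (by linarith)
      linarith




/-- The core of the probabilistic-method step: for any regret vector `ρ` there
is a profile `m` whose one-step regret increment, weighted by positive parts of
`ρ`, is nonpositive. -/
lemma exists_good_profile (ρ : ∀ i : Fin N, A i → A i → ℝ) :
    ∃ m : ∀ j, A j, ∑ i, ∑ a, ∑ a', max 0 (ρ i a a') * D u i a a' m ≤ 0 := by
  classical
  choose q hq hstat using fun i =>
    exists_stationary (fun a a' => max 0 (ρ i a a')) (fun a b => le_max_left 0 _)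
  set w : (∀ j, A j) → ℝ := fun m => ∏ j, q j (m j) with hw
  have hw0 : ∀ m, 0 ≤ w m := fun m => Finset.prod_nonneg fun j _ => (hq j).1 (m j)
  have hpos : ∀ i, ∃ a, 0 < q i a := by
    intro i
    by_contra h; push_neg at h
    have : ∑ a, q i a ≤ 0 := Finset.sum_nonpos fun a _ => h a
    rw [(hq i).2] at this; linarith
  choose m0 hm0 using hpos
  have hwm0 : 0 < w m0 := Finset.prod_pos fun j _ => hm0 j
  set E : Fin N → (∀ j, A j) → ℝ :=
    fun i m => ∏ j ∈ Finset.univ.erase i, q j (m j) with hE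
  set S : (i : Fin N) → A i → ℝ :=
    fun i c => ∑ m ∈ Finset.univ.filter (fun m : ∀ j, A j => m i = c), E i m * u i m with hS
  have hwE : ∀ (i : Fin N) (m : ∀ j, A j), w m = q i (m i) * E i m :=
    fun i m => (Finset.mul_prod_erase Finset.univ (fun j => q j (m j)) (Finset.mem_univ i)).symm
  have hEup : ∀ (i : Fin N) (m : ∀ j, A j) (c : A i), E i (Function.update m i c) = E i m := by
    intro i m c
    refine Finset.prod_congr rfl fun j hj => ?_
    rw [Function.update_of_ne (Finset.ne_of_mem_erase hj)]
  -- reindexing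
  have hbij : ∀ (i : Fin N) (a a' : A i),
      ∑ m ∈ Finset.univ.filter (fun m : ∀ j, A j => m i = a),
        E i m * u i (Function.update m i a') = S i a' := by
    intro i a a'
    rw [hS]
    refine Finset.sum_nbij' (fun m => Function.update m i a') (fun m => Function.update m i a)
      ?_ ?_ ?_ ?_ ?_
    · intro m hm
      simp [Function.update_self]
    · intro m hm
      simp [Function.update_self]
    · intro m hm
      have hma : m i = a := (Finset.mem_filter.mp hm).2
      show Function.update (Function.update m i a') i a = m
      rw [Function.update_idem, ← hma, Function.update_eq_self]
    · intro m hm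
      have hma : m i = a' := (Finset.mem_filter.mp hm).2
      show Function.update (Function.update m i a) i a' = m
      rw [Function.update_idem, ← hma, Function.update_eq_self]
    · intro m hm
      rw [hEup i m a']
  -- the weighted one-step regret of a single pair
  have h2 : ∀ (i : Fin N) (a a' : A i),
      ∑ m, w m * D u i a a' m = q i a * (S i a' - S i a) := by
    intro i a a'
    have step1 : ∑ m, w m * D u i a a' m
        = ∑ m ∈ Finset.univ.filter (fun m : ∀ j, A j => m i = a),
            w m * (u i (Function.update m i a') - u i m) := by
      rw [Finset.sum_filter]
      exact Finset.sum_congr rfl fun m _ => by by_cases h : m i = a <;> simp [D, h]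
    rw [step1]
    have step2 : ∀ m ∈ Finset.univ.filter (fun m : ∀ j, A j => m i = a),
        w m * (u i (Function.update m i a') - u i m)
          = q i a * (E i m * u i (Function.update m i a')) - q i a * (E i m * u i m) := by
      intro m hm
      have hma : m i = a := (Finset.mem_filter.mp hm).2
      rw [hwE i m, hma]; ring
    rw [Finset.sum_congr rfl step2, Finset.sum_sub_distrib, ← Finset.mul_sum, ← Finset.mul_sum,
      hbij i a a']
    have hfold : (∑ m ∈ Finset.univ.filter (fun m : ∀ j, A j => m i = a), E i m * u i m)
        = S i a := rfl
    rw [hfold]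
    ring
  -- stationarity kills the sum
  have main_i : ∀ i : Fin N,
      ∑ a, ∑ a', max 0 (ρ i a a') * (q i a * (S i a' - S i a)) = 0 := by
    intro i
    have T1 : ∑ a, ∑ a', max 0 (ρ i a a') * q i a * S i a'
        = ∑ c, (q i c * ∑ b, max 0 (ρ i c b)) * S i c := by
      rw [Finset.sum_comm]
      refine Finset.sum_congr rfl fun c _ => ?_
      rw [← hstat i c, Finset.sum_mul]
      exact Finset.sum_congr rfl fun a _ => by ring
    have T2 : ∑ a, ∑ a', max 0 (ρ i a a') * q i a * S i a
        = ∑ c, (q i c * ∑ b, max 0 (ρ i c b)) * S i c := by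
      refine Finset.sum_congr rfl fun c _ => ?_
      rw [← Finset.sum_mul, ← Finset.sum_mul]
      ring
    calc ∑ a, ∑ a', max 0 (ρ i a a') * (q i a * (S i a' - S i a))
        = ∑ a, ∑ a', (max 0 (ρ i a a') * q i a * S i a'
            - max 0 (ρ i a a') * q i a * S i a) := by
          refine Finset.sum_congr rfl fun a _ => Finset.sum_congr rfl fun a' _ => by ring
      _ = ∑ a, (∑ a', max 0 (ρ i a a') * q i a * S i a'
            - ∑ a', max 0 (ρ i a a') * q i a * S i a) := by
          exact Finset.sum_congr rfl fun a _ => Finset.sum_sub_distrib _ _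
      _ = (∑ a, ∑ a', max 0 (ρ i a a') * q i a * S i a')
            - ∑ a, ∑ a', max 0 (ρ i a a') * q i a * S i a := Finset.sum_sub_distrib _ _
      _ = 0 := by rw [T1, T2, sub_self]
  have hzero : ∑ m, w m * (∑ i, ∑ a, ∑ a', max 0 (ρ i a a') * D u i a a' m) = 0 := by
    have swap : ∑ m, w m * (∑ i, ∑ a, ∑ a', max 0 (ρ i a a') * D u i a a' m)
        = ∑ i, ∑ a, ∑ a', max 0 (ρ i a a') * ∑ m, w m * D u i a a' m := by
      have e1 : ∀ m, w m * (∑ i, ∑ a, ∑ a', max 0 (ρ i a a') * D u i a a' m)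
          = ∑ i, ∑ a, ∑ a', max 0 (ρ i a a') * (w m * D u i a a' m) := by
        intro m
        rw [Finset.mul_sum]
        refine Finset.sum_congr rfl fun i _ => ?_
        rw [Finset.mul_sum]
        refine Finset.sum_congr rfl fun a _ => ?_
        rw [Finset.mul_sum]
        exact Finset.sum_congr rfl fun a' _ => by ring
      rw [Finset.sum_congr rfl fun m _ => e1 m, Finset.sum_comm]
      refine Finset.sum_congr rfl fun i _ => ?_
      rw [Finset.sum_comm]
      refine Finset.sum_congr rfl fun a _ => ?_
      rw [Finset.sum_comm]
      refine Finset.sum_congr rfl fun a' _ => ?_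
      rw [Finset.mul_sum]
    rw [swap]
    have hz : ∀ i : Fin N, ∑ a, ∑ a', max 0 (ρ i a a') * ∑ m, w m * D u i a a' m = 0 := by
      intro i
      calc ∑ a, ∑ a', max 0 (ρ i a a') * ∑ m, w m * D u i a a' m
          = ∑ a, ∑ a', max 0 (ρ i a a') * (q i a * (S i a' - S i a)) :=
            Finset.sum_congr rfl fun a _ => Finset.sum_congr rfl fun a' _ => by rw [h2]
        _ = 0 := main_i i
    rw [Finset.sum_congr rfl fun i _ => hz i, Finset.sum_const, smul_zero]
  by_contra hcon
  push_neg at hcon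
  have : 0 < ∑ m, w m * (∑ i, ∑ a, ∑ a', max 0 (ρ i a a') * D u i a a' m) := by
    refine Finset.sum_pos' (fun m _ => mul_nonneg (hw0 m) (hcon m).le) ?_
    exact ⟨m0, Finset.mem_univ m0, mul_pos hwm0 (hcon m0)⟩
  rw [hzero] at this
  exact lt_irrefl 0 this

noncomputable def stepFn (ρ : ∀ i : Fin N, A i → A i → ℝ) : ∀ j, A j :=
  Classical.choose (exists_good_profile u ρ)

lemma stepFn_spec (ρ : ∀ i : Fin N, A i → A i → ℝ) :
    ∑ i, ∑ a, ∑ a', max 0 (ρ i a a') * D u i a a' (stepFn u ρ) ≤ 0 :=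
  Classical.choose_spec (exists_good_profile u ρ)

/-- Cumulative regrets of the recursively constructed no-regret sequence. -/
noncomputable def rho : ℕ → ∀ i : Fin N, A i → A i → ℝ
  | 0 => fun _ _ _ => 0
  | (T+1) => fun i a a' => rho T i a a' + D u i a a' (stepFn u (rho T))

/-- The recursively constructed no-regret sequence of profiles. -/
noncomputable def kappa : ℕ → ∀ j, A j
  | 0 => Classical.arbitrary _
  | (T+1) => stepFn u (rho u T)

lemma rho_eq (T : ℕ) (i : Fin N) (a a' : A i) :
    rho u T i a a' = ∑ t ∈ Finset.Icc 1 T, D u i a a' (kappa u t) := by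
  induction T with
  | zero => simp [rho]
  | succ T ih =>
    rw [Finset.sum_Icc_succ_top (Nat.succ_le_succ (Nat.zero_le T))]
    show rho u T i a a' + D u i a a' (stepFn u (rho u T)) = _
    rw [ih]
    rfl

/-- The potential function. -/
noncomputable def pot (T : ℕ) : ℝ :=
  ∑ i, ∑ a, ∑ a', (max 0 (rho u T i a a'))^2

/-- Bound on the per-step potential increment. -/
noncomputable def Bconst : ℝ :=
  ∑ i, ∑ a, ∑ a', ∑ b, (D u i a a' b)^2

lemma sq_max_bound (r x : ℝ) :
    (max 0 (r + x))^2 ≤ (max 0 r)^2 + 2 * (max 0 r) * x + x^2 := by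
  rcases le_total (r + x) 0 with h | h
  · rw [max_eq_left h]
    nlinarith [le_max_left 0 r, le_max_right 0 r, sq_nonneg (max 0 r + x)]
  · rw [max_eq_right h]
    nlinarith [le_max_left 0 r, le_max_right 0 r]

lemma pot_step (T : ℕ) : pot u (T+1) ≤ pot u T + Bconst u := by
  have key : ∀ (i : Fin N) (a a' : A i),
      (max 0 (rho u (T+1) i a a'))^2
        ≤ (max 0 (rho u T i a a'))^2
          + 2 * (max 0 (rho u T i a a')) * D u i a a' (stepFn u (rho u T))
          + (D u i a a' (stepFn u (rho u T)))^2 := by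
    intro i a a'
    exact sq_max_bound _ _
  have hsum : pot u (T+1)
      ≤ pot u T + 2 * (∑ i, ∑ a, ∑ a', max 0 (rho u T i a a')
            * D u i a a' (stepFn u (rho u T)))
        + ∑ i, ∑ a, ∑ a', (D u i a a' (stepFn u (rho u T)))^2 := by
    unfold pot
    have h1 : ∑ i, ∑ a, ∑ a', (max 0 (rho u (T+1) i a a'))^2
        ≤ ∑ i, ∑ a, ∑ a', ((max 0 (rho u T i a a'))^2
          + 2 * (max 0 (rho u T i a a')) * D u i a a' (stepFn u (rho u T))
          + (D u i a a' (stepFn u (rho u T)))^2) := by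
      exact Finset.sum_le_sum fun i _ => Finset.sum_le_sum fun a _ =>
        Finset.sum_le_sum fun a' _ => key i a a'
    refine h1.trans (le_of_eq ?_)
    simp only [Finset.sum_add_distrib, Finset.mul_sum]
    ring
  have hB : ∑ i, ∑ a, ∑ a', (D u i a a' (stepFn u (rho u T)))^2 ≤ Bconst u := by
    unfold Bconst
    refine Finset.sum_le_sum fun i _ => Finset.sum_le_sum fun a _ =>
      Finset.sum_le_sum fun a' _ => ?_
    exact Finset.single_le_sum (f := fun b => (D u i a a' b)^2)
      (fun b _ => sq_nonneg _) (Finset.mem_univ _)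
  have hstep := stepFn_spec u (rho u T)
  calc pot u (T+1) ≤ _ := hsum
    _ ≤ pot u T + 2 * 0 + Bconst u := by
        have := mul_le_mul_of_nonneg_left hstep (by norm_num : (0:ℝ) ≤ 2)
        linarith [hB]
    _ = pot u T + Bconst u := by ring

lemma pot_bound (T : ℕ) : pot u T ≤ Bconst u * T := by
  induction T with
  | zero => simp [pot, rho]
  | succ T ih =>
    have := pot_step u T
    push_cast
    push_cast at ih
    linarith

lemma regret_sq_bound (T : ℕ) (i : Fin N) (a a' : A i) :
    (max 0 (rho u T i a a'))^2 ≤ Bconst u * T := by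
  refine le_trans ?_ (pot_bound u T)
  unfold pot
  have h1 : (max 0 (rho u T i a a'))^2 ≤ ∑ c : A i, (max 0 (rho u T i a c))^2 :=
    Finset.single_le_sum (f := fun c : A i => (max 0 (rho u T i a c))^2)
      (fun _ _ => sq_nonneg _) (Finset.mem_univ _)
  have h2 : ∑ c : A i, (max 0 (rho u T i a c))^2
      ≤ ∑ a, ∑ a', (max 0 (rho u T i a a'))^2 :=
    Finset.single_le_sum (f := fun a => ∑ a', (max 0 (rho u T i a a'))^2)
      (fun _ _ => Finset.sum_nonneg fun _ _ => sq_nonneg _) (Finset.mem_univ _)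
  have h3 : ∑ a, ∑ a', (max 0 (rho u T i a a'))^2
      ≤ ∑ i, ∑ a, ∑ a', (max 0 (rho u T i a a'))^2 :=
    Finset.single_le_sum (f := fun i => ∑ a, ∑ a', (max 0 (rho u T i a a'))^2)
      (fun _ _ => Finset.sum_nonneg fun _ _ => Finset.sum_nonneg fun _ _ => sq_nonneg _)
      (Finset.mem_univ _)
  linarith


/-- Correlated ε-equilibria exist. -/
lemma exists_correlated_equilibrium (ε : ℝ) (hε : 0 ≤ ε) :
    ∃ ψ : (∀ j, A j) → ℝ, IsCorrelatedEpsEquilibrium u ε ψ := by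
  classical
  set k : ℕ → ∀ j, A j := kappa u with hk
  set f : ℕ → (∀ j, A j) → ℝ :=
    fun T b => ((Finset.Icc 1 T).filter (fun t => k t = b)).card / (T : ℝ) with hfdef
  have hf : ∀ T b, f T b
      = ((Finset.Icc 1 T).filter (fun t => k t = b)).card / (T : ℝ) := fun _ _ => rfl
  have Hlim : ∀ (i : Fin N) (a a' : A i), a ≠ a' → ∀ δ > (0:ℝ), ∀ᶠ T : ℕ in atTop,
      (1/(T:ℝ)) * ∑ t ∈ Finset.Icc 1 T, D u i a a' (k t) < ε + δ := by
    intro i a a' _ δ hδ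
    have h1 : Tendsto (fun T : ℕ => Bconst u / (T:ℝ)) atTop (nhds 0) :=
      tendsto_const_div_atTop_nhds_zero_nat (Bconst u)
    have h2 : ∀ᶠ T : ℕ in atTop, Bconst u / (T:ℝ) < δ^2 :=
      (tendsto_order.mp h1).2 (δ^2) (by positivity)
    filter_upwards [h2, eventually_ge_atTop 1] with T hT1 hT2
    have hT0 : (0:ℝ) < T := by exact_mod_cast hT2
    set r : ℝ := rho u T i a a' with hr
    set p : ℝ := max 0 r with hp
    have hp0 : 0 ≤ p := le_max_left 0 r
    have hsq : p^2 ≤ Bconst u * T := regret_sq_bound u T i a a'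
    have h4 : ((1/(T:ℝ))*p)^2 ≤ Bconst u / (T:ℝ) := by
      have e : ((1/(T:ℝ))*p)^2 = p^2/(T:ℝ)^2 := by ring
      rw [e, div_le_div_iff₀ (by positivity) hT0]
      nlinarith [mul_le_mul_of_nonneg_right hsq hT0.le]
    have h5 : ((1/(T:ℝ))*p)^2 < δ^2 := lt_of_le_of_lt h4 hT1
    have h6 : (1/(T:ℝ))*p < δ := by
      have := lt_of_pow_lt_pow_left₀ 2 hδ.le h5
      exact this
    have h7 : ∑ t ∈ Finset.Icc 1 T, D u i a a' (k t) = r := (rho_eq u T i a a').symm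
    rw [h7]
    have h8 : (1/(T:ℝ)) * r ≤ (1/(T:ℝ)) * p :=
      mul_le_mul_of_nonneg_left (le_max_right 0 r) (by positivity)
    linarith
  have hmem : ∀ n : ℕ, f (n+1) ∈ simplex (∀ j, A j) := by
    intro n
    constructor
    · intro b
      rw [hf]
      positivity
    · exact sum_f_one k f hf (Nat.le_add_left 1 n)
  obtain ⟨ψ, hψmem, σ, hσ, hlim⟩ :=
    isCompact_simplex.tendsto_subseq (x := fun n => f (n+1)) hmem
  refine ⟨ψ, limit_is_equilibrium u ε hε k f hf Hlim (fun n => σ n + 1) ?_ ψ ?_⟩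
  · exact (tendsto_add_atTop_nat 1).comp hσ.tendsto_atTop
  · intro b
    exact tendsto_pi_nhds.mp hlim b

/-- Forward direction: if the asymptotic average regrets are at most ε, the
empirical distributions converge to the set of correlated ε-equilibria. -/
lemma tendsto_sInf_of_no_regret (ε : ℝ) (hε : 0 ≤ ε) (k : ℕ → ∀ j, A j)
    (f : ℕ → (∀ j, A j) → ℝ)
    (hf : ∀ T b, f T b = ((Finset.Icc 1 T).filter (fun t => k t = b)).card / (T : ℝ))
    (Hlim : ∀ (i : Fin N) (a a' : A i), a ≠ a' → ∀ δ > (0:ℝ), ∀ᶠ T : ℕ in atTop,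
        (1/(T:ℝ)) * ∑ t ∈ Finset.Icc 1 T, D u i a a' (k t) < ε + δ) :
    Tendsto (fun T => sInf {d : ℝ | ∃ ψ : (∀ j, A j) → ℝ,
        IsCorrelatedEpsEquilibrium u ε ψ ∧
        d = Finset.univ.sup' Finset.univ_nonempty
              (fun b : (∀ j, A j) => |f T b - ψ b|)})
      atTop (nhds 0) := by
  classical
  set S : ℕ → Set ℝ := fun T => {d : ℝ | ∃ ψ : (∀ j, A j) → ℝ,
      IsCorrelatedEpsEquilibrium u ε ψ ∧
      d = Finset.univ.sup' Finset.univ_nonempty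
            (fun b : (∀ j, A j) => |f T b - ψ b|)} with hSdef
  have hS0 : ∀ T, ∀ d ∈ S T, (0:ℝ) ≤ d := by
    rintro T d ⟨ψ, _, rfl⟩
    exact le_trans (abs_nonneg (f T (Classical.arbitrary (∀ j, A j)) - ψ (Classical.arbitrary (∀ j, A j))))
      (Finset.le_sup' (fun b : (∀ j, A j) => |f T b - ψ b|)
        (Finset.mem_univ (Classical.arbitrary (∀ j, A j))))
  have hInf0 : ∀ T, 0 ≤ sInf (S T) := fun T => Real.sInf_nonneg (hS0 T)
  have key : ∀ δ > (0:ℝ), ∀ᶠ T : ℕ in atTop, sInf (S T) < δ := by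
    intro δ hδ
    by_contra hcon
    rw [Filter.not_eventually] at hcon
    have hfreq : ∃ᶠ T : ℕ in atTop, δ ≤ sInf (S T) ∧ 1 ≤ T := by
      refine (hcon.mono ?_).and_eventually (eventually_ge_atTop 1)
      intro T hT
      exact not_lt.mp hT
    obtain ⟨φ0, hφ0, hφ0p⟩ := Filter.extraction_of_frequently_atTop hfreq
    have hmem : ∀ n : ℕ, f (φ0 n) ∈ simplex (∀ j, A j) := by
      intro n
      constructor
      · intro b; rw [hf]; positivity
      · exact sum_f_one k f hf (hφ0p n).2
    obtain ⟨ψ, hψmem, σ, hσ, hlim⟩ :=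
      isCompact_simplex.tendsto_subseq (x := fun n => f (φ0 n)) hmem
    have hpt : ∀ b, Tendsto (fun n => f (φ0 (σ n)) b) atTop (nhds (ψ b)) :=
      fun b => tendsto_pi_nhds.mp hlim b
    have heq : IsCorrelatedEpsEquilibrium u ε ψ := by
      refine limit_is_equilibrium u ε hε k f hf Hlim (φ0 ∘ σ) ?_ ψ hpt
      exact (hφ0.comp hσ).tendsto_atTop
    have hev : ∀ᶠ n : ℕ in atTop, ∀ b : (∀ j, A j), |f (φ0 (σ n)) b - ψ b| < δ := by
      rw [eventually_all]
      intro b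
      have h1 : Tendsto (fun n => |f (φ0 (σ n)) b - ψ b|) atTop (nhds 0) := by
        have h2 := (hpt b).sub (tendsto_const_nhds (x := ψ b))
        rw [sub_self] at h2
        simpa using h2.abs
      exact (tendsto_order.mp h1).2 δ hδ
    obtain ⟨n, hn⟩ := hev.exists
    have hd : Finset.univ.sup' Finset.univ_nonempty
        (fun b : (∀ j, A j) => |f (φ0 (σ n)) b - ψ b|) < δ :=
      (Finset.sup'_lt_iff Finset.univ_nonempty).mpr fun b _ => hn b
    have hdS : Finset.univ.sup' Finset.univ_nonempty
        (fun b : (∀ j, A j) => |f (φ0 (σ n)) b - ψ b|) ∈ S (φ0 (σ n)) := ⟨ψ, heq, rfl⟩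
    have hle : sInf (S (φ0 (σ n))) ≤ Finset.univ.sup' Finset.univ_nonempty
        (fun b : (∀ j, A j) => |f (φ0 (σ n)) b - ψ b|) :=
      csInf_le ⟨0, hS0 _⟩ hdS
    have := (hφ0p (σ n)).1
    linarith
  rw [Metric.tendsto_atTop]
  intro δ hδ
  obtain ⟨T0, hT0⟩ := Filter.eventually_atTop.mp (key (δ/2) (by linarith))
  refine ⟨T0, fun n hn => ?_⟩
  rw [Real.dist_eq, sub_zero, abs_of_nonneg (hInf0 n)]
  exact lt_of_lt_of_le (hT0 n hn) (by linarith)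

end CEE

end Game

theorem empirical_frequencies_converge_to_correlated_eps_equilibria_iff
    {N : ℕ} (A : Fin N → Type*) [∀ i, Fintype (A i)] [∀ i, DecidableEq (A i)]
    [∀ i, Nonempty (A i)]
    (u : (i : Fin N) → ((∀ j, A j) → ℝ))
    (k : ℕ → (∀ j, A j))
    (f : ℕ → (∀ j, A j) → ℝ)
    (hf : ∀ T b, f T b =
      ((Finset.Icc 1 T).filter (fun t => k t = b)).card / (T : ℝ))
    (R : ℕ → (i : Fin N) → A i → A i → ℝ)
    (hR : ∀ T i a a', R T i a a' = max 0 ((1 / (T : ℝ)) *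
      ∑ t ∈ Finset.Icc 1 T,
        (if k t i = a then u i (Function.update (k t) i a') - u i (k t) else 0)))
    (ε : ℝ) (hε : 0 ≤ ε) :
    (∀ (i : Fin N) (a a' : A i), a ≠ a' →
        limsup (fun T => R T i a a') atTop ≤ ε) ↔
      Tendsto (fun T => sInf {d : ℝ | ∃ ψ : (∀ j, A j) → ℝ,
          IsCorrelatedEpsEquilibrium u ε ψ ∧
          d = Finset.univ.sup' Finset.univ_nonempty
                (fun b : (∀ j, A j) => |f T b - ψ b|)})
        atTop (nhds 0) := by
  classical
  have hDsum : ∀ (T : ℕ) (i : Fin N) (a a' : A i),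
      (∑ t ∈ Finset.Icc 1 T,
        (if k t i = a then u i (Function.update (k t) i a') - u i (k t) else 0))
      = ∑ t ∈ Finset.Icc 1 T, CEE.D u i a a' (k t) := fun T i a a' => rfl
  have hub : ∀ (i : Fin N) (a a' : A i) (T : ℕ),
      R T i a a' ≤ ∑ b : (∀ j, A j), |CEE.D u i a a' b| := by
    intro i a a' T
    rw [hR, hDsum]
    set C' : ℝ := ∑ b : (∀ j, A j), |CEE.D u i a a' b| with hC'
    have hC'0 : 0 ≤ C' := Finset.sum_nonneg fun b _ => abs_nonneg _
    refine max_le hC'0 ?_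
    rcases Nat.eq_zero_or_pos T with hT | hT
    · subst hT
      simp [hC'0]
    · have hT0 : (0:ℝ) < T := by exact_mod_cast hT
      have hsum : ∑ t ∈ Finset.Icc 1 T, CEE.D u i a a' (k t) ≤ T * C' := by
        calc ∑ t ∈ Finset.Icc 1 T, CEE.D u i a a' (k t)
            ≤ ∑ t ∈ Finset.Icc 1 T, C' := by
              refine Finset.sum_le_sum fun t _ => ?_
              exact le_trans (le_abs_self _)
                (Finset.single_le_sum (f := fun b : (∀ j, A j) => |CEE.D u i a a' b|)
                  (fun _ _ => abs_nonneg _) (Finset.mem_univ _))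
          _ = ((Finset.Icc 1 T).card : ℝ) * C' := by
              rw [Finset.sum_const, nsmul_eq_mul]
          _ = T * C' := by rw [Nat.card_Icc]; simp
      calc (1/(T:ℝ)) * ∑ t ∈ Finset.Icc 1 T, CEE.D u i a a' (k t)
          ≤ (1/(T:ℝ)) * ((T:ℝ) * C') :=
            mul_le_mul_of_nonneg_left hsum (by positivity)
        _ = C' := by field_simp
  constructor
  · -- forward direction
    intro h
    refine CEE.tendsto_sInf_of_no_regret u ε hε k f hf ?_
    intro i a a' haa δ hδ
    have hbdd : IsBoundedUnder (· ≤ ·) atTop (fun T => R T i a a') :=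
      Filter.isBoundedUnder_of ⟨∑ b : (∀ j, A j), |CEE.D u i a a' b|,
        fun T => hub i a a' T⟩
    have hev : ∀ᶠ T in atTop, R T i a a' < ε + δ :=
      Filter.eventually_lt_of_limsup_lt (lt_of_le_of_lt (h i a a' haa) (by linarith)) hbdd
    filter_upwards [hev] with T hT
    calc (1/(T:ℝ)) * ∑ t ∈ Finset.Icc 1 T, CEE.D u i a a' (k t)
        ≤ max 0 ((1/(T:ℝ)) * ∑ t ∈ Finset.Icc 1 T, CEE.D u i a a' (k t)) :=
          le_max_right _ _
      _ = R T i a a' := by rw [hR, hDsum]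
      _ < ε + δ := hT
  · -- reverse direction
    intro h i a a' _
    obtain ⟨ψ0, hψ0⟩ := CEE.exists_correlated_equilibrium u ε hε
    set C : ℝ := ∑ b : (∀ j, A j), |CEE.D u i a a' b| with hC
    have hC0 : 0 ≤ C := Finset.sum_nonneg fun b _ => abs_nonneg _
    have hbdd : IsBoundedUnder (· ≥ ·) atTop (fun T => R T i a a') :=
      Filter.isBoundedUnder_of ⟨0, fun T => by rw [hR]; exact le_max_left 0 _⟩
    refine le_of_forall_pos_le_add ?_
    intro δ hδ
    set δ' : ℝ := δ / (C + 1) with hδ'def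
    have hδ' : 0 < δ' := by positivity
    have hev : ∀ᶠ T : ℕ in atTop,
        sInf {d : ℝ | ∃ ψ : (∀ j, A j) → ℝ,
          IsCorrelatedEpsEquilibrium u ε ψ ∧
          d = Finset.univ.sup' Finset.univ_nonempty
                (fun b : (∀ j, A j) => |f T b - ψ b|)} < δ' :=
      (tendsto_order.mp h).2 δ' hδ'
    have hev2 : ∀ᶠ T in atTop, R T i a a' ≤ ε + δ := by
      filter_upwards [hev] with T hT
      -- extract a nearby equilibrium
      have hne : {d : ℝ | ∃ ψ : (∀ j, A j) → ℝ,
          IsCorrelatedEpsEquilibrium u ε ψ ∧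
          d = Finset.univ.sup' Finset.univ_nonempty
                (fun b : (∀ j, A j) => |f T b - ψ b|)}.Nonempty :=
        ⟨_, ψ0, hψ0, rfl⟩
      obtain ⟨d, ⟨ψ, hψeq, rfl⟩, hd⟩ := exists_lt_of_csInf_lt hne hT
      have hsup : ∀ b : (∀ j, A j), |f T b - ψ b| < δ' := by
        intro b
        exact lt_of_le_of_lt
          (Finset.le_sup' (fun b : (∀ j, A j) => |f T b - ψ b|) (Finset.mem_univ b)) hd
      -- regret estimate
      have hsplit : ∑ b : (∀ j, A j), f T b * CEE.D u i a a' b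
          = (∑ b : (∀ j, A j), ψ b * CEE.D u i a a' b)
            + ∑ b : (∀ j, A j), (f T b - ψ b) * CEE.D u i a a' b := by
        rw [← Finset.sum_add_distrib]
        exact Finset.sum_congr rfl fun b _ => by ring
      have h1 : ∑ b : (∀ j, A j), ψ b * CEE.D u i a a' b ≤ ε := by
        rw [← CEE.sum_filter_eq]
        exact hψeq.2.2 i a a'
      have h2 : ∑ b : (∀ j, A j), (f T b - ψ b) * CEE.D u i a a' b ≤ δ := by
        have hterm : ∀ b : (∀ j, A j), (f T b - ψ b) * CEE.D u i a a' b
            ≤ δ' * |CEE.D u i a a' b| := by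
          intro b
          calc (f T b - ψ b) * CEE.D u i a a' b
              ≤ |(f T b - ψ b) * CEE.D u i a a' b| := le_abs_self _
            _ = |f T b - ψ b| * |CEE.D u i a a' b| := abs_mul _ _
            _ ≤ δ' * |CEE.D u i a a' b| :=
                mul_le_mul_of_nonneg_right (hsup b).le (abs_nonneg _)
        calc ∑ b : (∀ j, A j), (f T b - ψ b) * CEE.D u i a a' b
            ≤ ∑ b : (∀ j, A j), δ' * |CEE.D u i a a' b| :=
              Finset.sum_le_sum fun b _ => hterm b
          _ = δ' * C := by rw [← Finset.mul_sum]
          _ ≤ δ' * (C + 1) := by nlinarith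
          _ = δ := by rw [hδ'def]; field_simp
      have h3 : (1/(T:ℝ)) * ∑ t ∈ Finset.Icc 1 T, CEE.D u i a a' (k t) ≤ ε + δ := by
        rw [← CEE.sum_f_D u k f hf]
        linarith [hsplit, h1, h2]
      rw [hR, hDsum]
      exact max_le (by linarith) h3
    exact Filter.limsup_le_of_le hbdd.isCoboundedUnder_le hev2
end

section
/- Consider a finite N-player game: for each player i ∈ {1,…,N} a finite nonempty action set A_i, the profile set A = A_1 × ⋯ × A_N, and utility functions u_i : A → ℝ. Let k_1, k_2, … ∈ A be a sequence of profiles, f_T(b) = |{t ≤ T : k_t = b}|/T the empirical frequency, and R_T(i, a, a') = max{0, (1/T) Σ_{t ≤ T, (k_t)_i = a} (u_i(a', (k_t)_{-i}) − u_i(k_t))} the regret of player i for the pair (a, a'). Suppose that for every player i and every pair a ≠ a' in A_i there is a sequence of real numbers (R̃_T(i, a, a'))_{T ≥ 1} with R_T(i, a, a') ≤ R̃_T(i, a, a') for all T and R̃_T(i, a, a') → 0 as T → ∞. Then the empirical frequencies converge to the set of correlated equilibria: inf{ max_{b ∈ A} |f_T(b) − ψ(b)| : ψ a correlated equilibrium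 } → 0 as T → ∞. -/
open Filter

lemma fiber_sum {P : Type*} [Fintype P] [DecidableEq P] (k : ℕ → P) (T : ℕ)
    (pred : P → Prop) [DecidablePred pred] (c : P → ℝ) :
    ∑ b ∈ Finset.univ.filter (fun b => pred b),
      ((((Finset.Icc 1 T).filter (fun t => k t = b)).card : ℝ) * c b)
      = ∑ t ∈ Finset.Icc 1 T, (if pred (k t) then c (k t) else 0) := by
  have h1 : ∀ b : P, (((Finset.Icc 1 T).filter (fun t => k t = b)).card : ℝ) * c b
      = ∑ t ∈ Finset.Icc 1 T, (if k t = b then c b else 0) := by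
    intro b
    rw [Finset.sum_ite, Finset.sum_const_zero, add_zero, Finset.sum_const, nsmul_eq_mul]
  simp_rw [h1]
  rw [Finset.sum_comm]
  refine Finset.sum_congr rfl fun t _ => ?_
  by_cases h : pred (k t)
  · rw [if_pos h]
    rw [Finset.sum_eq_single (k t)]
    · simp
    · intro b _ hb; simp [Ne.symm hb]
    · intro hb; exact absurd (Finset.mem_filter.mpr ⟨Finset.mem_univ _, h⟩) hb
  · rw [if_neg h]
    apply Finset.sum_eq_zero
    intro b hb
    rw [if_neg]
    rintro rfl
    exact h (Finset.mem_filter.mp hb).2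

theorem dominated_vanishing_regret_implies_convergence_to_CE
    {N : ℕ} (A : Fin N → Type*) [∀ i, Fintype (A i)] [∀ i, DecidableEq (A i)]
    [∀ i, Nonempty (A i)]
    (u : (i : Fin N) → ((∀ j, A j) → ℝ))
    (k : ℕ → (∀ j, A j))
    (f : ℕ → (∀ j, A j) → ℝ)
    (hf : ∀ T b, f T b =
      ((Finset.Icc 1 T).filter (fun t => k t = b)).card / (T : ℝ))
    (R : ℕ → (i : Fin N) → A i → A i → ℝ)
    (hR : ∀ T i a a', R T i a a' = max 0 ((1 / (T : ℝ)) *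
      ∑ t ∈ Finset.Icc 1 T,
        (if k t i = a then u i (Function.update (k t) i a') - u i (k t) else 0)))
    (REst : ℕ → (i : Fin N) → A i → A i → ℝ)
    (hdom : ∀ (T : ℕ) (i : Fin N) (a a' : A i), a ≠ a' →
      R T i a a' ≤ REst T i a a')
    (hto0 : ∀ (i : Fin N) (a a' : A i), a ≠ a' →
      Tendsto (fun T => REst T i a a') atTop (nhds 0)) :
    Tendsto (fun T => sInf {d : ℝ | ∃ ψ : (∀ j, A j) → ℝ,
        IsCorrelatedEpsEquilibrium u 0 ψ ∧
        d = Finset.univ.sup' Finset.univ_nonempty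
              (fun b : (∀ j, A j) => |f T b - ψ b|)})
      atTop (nhds 0) := by
  classical
  set S : ℕ → Set ℝ := fun T => {d : ℝ | ∃ ψ : (∀ j, A j) → ℝ,
        IsCorrelatedEpsEquilibrium u 0 ψ ∧
        d = Finset.univ.sup' Finset.univ_nonempty
              (fun b : (∀ j, A j) => |f T b - ψ b|)} with hSdef
  -- basic bounds on f
  have hf01 : ∀ T b, f T b ∈ Set.Icc (0:ℝ) 1 := by
    intro T b
    rw [hf]
    constructor
    · positivity
    · rcases Nat.eq_zero_or_pos T with h | h
      · simp [h]
      · rw [div_le_one (by exact_mod_cast h)]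
        have hle : ((Finset.Icc 1 T).filter (fun t => k t = b)).card ≤ T := by
          simpa [Nat.card_Icc] using Finset.card_filter_le (Finset.Icc 1 T) (fun t => k t = b)
        exact_mod_cast hle
  -- sum of frequencies is 1 for T ≥ 1
  have hsum1 : ∀ T : ℕ, 1 ≤ T → ∑ b : (∀ j, A j), f T b = 1 := by
    intro T hT
    have hT0 : (T : ℝ) ≠ 0 := by positivity
    have hcard : (Finset.Icc 1 T).card
        = ∑ b : (∀ j, A j), ((Finset.Icc 1 T).filter (fun t => k t = b)).card :=
      Finset.card_eq_sum_card_fiberwise (fun t _ => Finset.mem_univ _)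
    have h2 : ∑ b : (∀ j, A j), f T b
        = ((∑ b : (∀ j, A j), (((Finset.Icc 1 T).filter (fun t => k t = b)).card : ℝ))) / T := by
      simp_rw [hf]
      rw [Finset.sum_div]
    rw [h2, ← Nat.cast_sum, ← hcard, Nat.card_Icc, Nat.add_sub_cancel, div_self hT0]
  -- the regret-sum identity for the empirical distribution
  have hG : ∀ (T : ℕ) (i : Fin N) (a a' : A i),
      ∑ b ∈ Finset.univ.filter (fun b : (∀ j, A j) => b i = a),
        f T b * (u i (Function.update b i a') - u i b)
      = (1 / (T : ℝ)) * ∑ t ∈ Finset.Icc 1 T,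
        (if k t i = a then u i (Function.update (k t) i a') - u i (k t) else 0) := by
    intro T i a a'
    have := fiber_sum k T (fun b : (∀ j, A j) => b i = a)
      (fun b => u i (Function.update b i a') - u i b)
    rw [← this, Finset.mul_sum]
    refine Finset.sum_congr rfl fun b _ => ?_
    rw [hf]
    ring
  -- every element of S T is nonnegative
  have hSlb : ∀ T, ∀ d ∈ S T, (0:ℝ) ≤ d := by
    rintro T d ⟨ψ, _, rfl⟩
    obtain ⟨b⟩ : Nonempty (∀ j, A j) := inferInstance
    exact le_trans (abs_nonneg (f T b - ψ b))
      (Finset.le_sup' (fun b : (∀ j, A j) => |f T b - ψ b|) (Finset.mem_univ b))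
  have hg0 : ∀ T, (0:ℝ) ≤ sInf (S T) := fun T => Real.sInf_nonneg (hSlb T)
  rw [show (fun T => sInf {d : ℝ | ∃ ψ : (∀ j, A j) → ℝ,
        IsCorrelatedEpsEquilibrium u 0 ψ ∧
        d = Finset.univ.sup' Finset.univ_nonempty
              (fun b : (∀ j, A j) => |f T b - ψ b|)}) = fun T => sInf (S T) from rfl]
  refine tendsto_order.2 ⟨fun a ha => Eventually.of_forall fun T => lt_of_lt_of_le ha (hg0 T),
    fun δ hδ => ?_⟩
  by_contra hcon
  rw [not_eventually] at hcon
  obtain ⟨s0, hs0mono, hs0⟩ := Filter.extraction_of_frequently_atTop hcon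
  have hs0' : ∀ n, δ ≤ sInf (S (s0 n)) := fun n => not_lt.mp (hs0 n)
  -- compactness
  have hK : IsCompact (Set.univ.pi fun _ : (∀ j, A j) => Set.Icc (0:ℝ) 1) :=
    isCompact_univ_pi fun _ => isCompact_Icc
  have hmem : ∀ n, f (s0 n) ∈ Set.univ.pi fun _ : (∀ j, A j) => Set.Icc (0:ℝ) 1 :=
    fun n b _ => hf01 _ b
  obtain ⟨ψ, hψK, φ, hφmono, hφtend⟩ := hK.tendsto_subseq hmem
  set s : ℕ → ℕ := s0 ∘ φ with hsdef
  have hsmono : StrictMono s := hs0mono.comp hφmono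
  have hstend : Tendsto s atTop atTop := hsmono.tendsto_atTop
  have hcoord : ∀ b : (∀ j, A j), Tendsto (fun n => f (s n) b) atTop (nhds (ψ b)) :=
    fun b => (tendsto_pi_nhds.mp hφtend) b
  -- ψ is a correlated equilibrium
  have hCE : IsCorrelatedEpsEquilibrium u 0 ψ := by
    refine ⟨fun b => (hψK b (Set.mem_univ b)).1, ?_, ?_⟩
    · have h1 : Tendsto (fun n => ∑ b : (∀ j, A j), f (s n) b) atTop
          (nhds (∑ b : (∀ j, A j), ψ b)) :=
        tendsto_finset_sum _ (fun b _ => hcoord b)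
      have h2 : Tendsto (fun n => ∑ b : (∀ j, A j), f (s n) b) atTop (nhds 1) := by
        apply Tendsto.congr' _ tendsto_const_nhds
        filter_upwards [hstend.eventually_ge_atTop 1] with n hn
        exact (hsum1 (s n) hn).symm
      exact tendsto_nhds_unique h1 h2
    · intro i a a'
      by_cases haa : a = a'
      · subst haa
        have hz : ∀ b ∈ Finset.univ.filter (fun b : (∀ j, A j) => b i = a),
            ψ b * (u i (Function.update b i a) - u i b) = 0 := by
          intro b hb
          have hbi : b i = a := (Finset.mem_filter.mp hb).2
          rw [← hbi, Function.update_eq_self]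
          ring
        rw [Finset.sum_congr rfl hz]
        simp
      · have hGtend : Tendsto (fun n => ∑ b ∈ Finset.univ.filter
            (fun b : (∀ j, A j) => b i = a),
            f (s n) b * (u i (Function.update b i a') - u i b)) atTop
            (nhds (∑ b ∈ Finset.univ.filter (fun b : (∀ j, A j) => b i = a),
              ψ b * (u i (Function.update b i a') - u i b))) :=
          tendsto_finset_sum _ (fun b _ => (hcoord b).mul tendsto_const_nhds)
        have hREtend : Tendsto (fun n => REst (s n) i a a') atTop (nhds 0) :=
          (hto0 i a a' haa).comp hstend
        have hle : ∀ n, ∑ b ∈ Finset.univ.filter (fun b : (∀ j, A j) => b i = a),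
            f (s n) b * (u i (Function.update b i a') - u i b) ≤ REst (s n) i a a' := by
          intro n
          calc ∑ b ∈ Finset.univ.filter (fun b : (∀ j, A j) => b i = a),
              f (s n) b * (u i (Function.update b i a') - u i b)
              = (1 / ((s n : ℕ) : ℝ)) * ∑ t ∈ Finset.Icc 1 (s n),
                (if k t i = a then u i (Function.update (k t) i a') - u i (k t) else 0) :=
                hG (s n) i a a'
            _ ≤ R (s n) i a a' := by rw [hR]; exact le_max_right _ _
            _ ≤ REst (s n) i a a' := hdom (s n) i a a' haa
        exact le_of_tendsto_of_tendsto' hGtend hREtend hle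
  -- contradiction
  have hDle : ∀ n, sInf (S (s n)) ≤ ∑ b : (∀ j, A j), |f (s n) b - ψ b| := by
    intro n
    have hmemS : (Finset.univ.sup' Finset.univ_nonempty
        (fun b : (∀ j, A j) => |f (s n) b - ψ b|)) ∈ S (s n) := ⟨ψ, hCE, rfl⟩
    refine le_trans (csInf_le ⟨0, fun d hd => hSlb _ d hd⟩ hmemS) ?_
    refine Finset.sup'_le _ _ fun b _ => ?_
    exact Finset.single_le_sum (f := fun b : (∀ j, A j) => |f (s n) b - ψ b|)
      (fun b _ => abs_nonneg _) (Finset.mem_univ b)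
  have hSg : Tendsto (fun n => ∑ b : (∀ j, A j), |f (s n) b - ψ b|) atTop (nhds 0) := by
    have h3 : Tendsto (fun n => ∑ b : (∀ j, A j), |f (s n) b - ψ b|) atTop
        (nhds (∑ b : (∀ j, A j), |ψ b - ψ b|)) :=
      tendsto_finset_sum _ (fun b _ => ((hcoord b).sub tendsto_const_nhds).abs)
    simpa using h3
  obtain ⟨n, hn⟩ := (hSg.eventually_lt_const hδ).exists
  have hfin : δ ≤ sInf (S (s n)) := hs0' (φ n)
  exact absurd (lt_of_le_of_lt (hfin.trans (hDle n)) hn) (lt_irrefl δ)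
end
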